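/- Let M be an N-periodic infinite symmetric tridiagonal matrix with nonzero off-diagonal entries, and suppose polynomials A, B satisfy [M, A(M)_+ − A(M)_−] = 0 and [M, B(M)_+ − B(M)_−] = 0. Then for any polynomial Q, the matrix Q(M)(A(M)_+ − A(M)_−) + (B(M)_+ − B(M)_−) equals C(M)_+ − C(M)_− for some polynomial C, and [M, C(M)_+ − C(M)_−] = 0. -/

import Mathlib

namespace Toda

/-- Infinite ℤ×ℤ matrices over ℂ. -/
abbrev Mat : Type := ℤ → ℤ → ℂ

/-- Matrix multiplication (entrywise `tsum`; for band-type matrices these sums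
are finitely supported). -/
noncomputable def mul (X Y : Mat) : Mat := fun i j => ∑' k : ℤ, X i k * Y k j

/-- Commutator. -/
noncomputable def comm (X Y : Mat) : Mat := mul X Y - mul Y X

/-- Strictly upper triangular part. -/
def upper (X : Mat) : Mat := fun i j => if i < j then X i j else 0

/-- Strictly lower triangular part. -/
def lower (X : Mat) : Mat := fun i j => if j < i then X i j else 0

/-- Diagonal part. -/
def diagPart (X : Mat) : Mat := fun i j => if i = j then X i j else 0

/-- Identity matrix. -/
def one : Mat := fun i j => if i = j then 1 else 0

/-- Matrix powers. -/
noncomputable def pow (X : Mat) : ℕ → Mat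
  | 0 => one
  | m + 1 => mul X (pow X m)

/-- Evaluate a polynomial on a matrix. -/
noncomputable def evalPoly (A : Polynomial ℂ) (X : Mat) : Mat :=
  ∑ m ∈ Finset.range (A.natDegree + 1), A.coeff m • pow X m

/-- `N`-periodicity of entries. -/
def Periodic (N : ℕ) (X : Mat) : Prop := ∀ i j, X (i + N) (j + N) = X i j

/-- `X` has (pure) degree `k`: nonzero entries only on diagonal `j = i + k`. -/
def HasDegree (k : ℤ) (X : Mat) : Prop := ∀ i j, X i j ≠ 0 → j = i + k

/-- `X` has maximal degree `k`: entries vanish above diagonal `k`. -/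
def MaxDeg (k : ℤ) (X : Mat) : Prop := ∀ i j, X i j ≠ 0 → j - i ≤ k

/-- The infinite symmetric tridiagonal Toda Lax matrix with diagonal `φ` and
off-diagonal entries `y`. -/
def todaM (φ y : ℤ → ℂ) : Mat := fun i j =>
  if j = i then φ i
  else if j = i + 1 then y i
  else if i = j + 1 then y j
  else 0

/-- Degree-`r` component of a matrix. -/
def topPart (r : ℤ) (X : Mat) : Mat := fun i j => if j = i + r then X i j else 0

/-- Inverse of the degree-`r` component (a matrix of degree `-r`). -/
noncomputable def topInv (r : ℤ) (X : Mat) : Mat :=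
  fun i j => if j = i - r then (X j (j + r))⁻¹ else 0

/-- Entrywise geometric series `Σ_{k≥0} (-1)^k Q^k`, which is a finite sum in
each entry when `Q` has maximal degree `≤ -1`. -/
noncomputable def geomSeries (Q : Mat) : Mat :=
  fun i j => ∑ m ∈ Finset.range ((i - j).toNat + 1), (-1 : ℂ) ^ m * pow Q m i j

/-- The inverse `R⁻¹ = (R^{(r)})⁻¹ Σ_{k≥0} (-1)^k (R̃ (R^{(r)})⁻¹)^k` of a matrix
of maximal degree `r` with invertible top component. -/
noncomputable def geomInv (r : ℤ) (R : Mat) : Mat :=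
  mul (topInv r R) (geomSeries (mul (R - topPart r R) (topInv r R)))

/-- Integer powers of a matrix, negative powers via the geometric-series inverse. -/
noncomputable def intPow (X : Mat) (m : ℤ) : Mat :=
  if 0 ≤ m then pow X m.toNat else pow (geomInv 1 X) (-m).toNat

/-- Shift operator `Z = D^N`. -/
def shiftZ (N : ℕ) : Mat := fun i j => if j = i + N then 1 else 0

/-- Inverse shift `Z⁻¹`. -/
def shiftZinv (N : ℕ) : Mat := fun i j => if j = i - N then 1 else 0

/-- The finite `N×N` periodic Toda Lax matrix with spectral parameter `z`,
diagonal `p`, off-diagonal entries `y 1, …, y (N-1)` and corner entries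
`y 0 * z`, `y 0 * z⁻¹`. -/
noncomputable def laxFin (N : ℕ) (p y : ℕ → ℂ) (z : ℂ) :
    Matrix (Fin N) (Fin N) ℂ := fun i j =>
  if (i : ℕ) = j then p i
  else if (j : ℕ) = i + 1 then y (i + 1)
  else if (i : ℕ) = j + 1 then y (j + 1)
  else if (i : ℕ) = 0 ∧ (j : ℕ) = N - 1 then y 0 * z
  else if (i : ℕ) = N - 1 ∧ (j : ℕ) = 0 then y 0 * z⁻¹
  else 0

/-- Embedding of polynomials in `x` into the field `ℂ((x⁻¹))` of Laurent series
at infinity, sending `x` to the inverse of the local parameter. -/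
noncomputable def atInf (p : Polynomial ℂ) : LaurentSeries ℂ :=
  Polynomial.eval₂ HahnSeries.C (HahnSeries.single (-1 : ℤ) 1) p

def BndRow (X : Mat) : Prop := ∀ i : ℤ, ∃ s : Finset ℤ, ∀ k ∉ s, X i k = 0

lemma mul_eq_sum {X Y : Mat} {i j : ℤ} {s : Finset ℤ} (h : ∀ k ∉ s, X i k = 0) :
    mul X Y i j = ∑ k ∈ s, X i k * Y k j := by
  apply tsum_eq_sum
  intro k hk; rw [h k hk, zero_mul]

lemma mul_eq_sum' {X Y : Mat} {i j : ℤ} {s : Finset ℤ} (h : ∀ k ∉ s, Y k j = 0) :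
    mul X Y i j = ∑ k ∈ s, X i k * Y k j := by
  apply tsum_eq_sum
  intro k hk; rw [h k hk, mul_zero]

lemma bndRow_mul {X Y : Mat} (hX : BndRow X) (hY : BndRow Y) : BndRow (mul X Y) := by
  intro i
  obtain ⟨s, hs⟩ := hX i
  refine ⟨s.biUnion (fun k => (hY k).choose), fun j hj => ?_⟩
  rw [mul_eq_sum hs]
  apply Finset.sum_eq_zero
  intro k hk
  rw [(hY k).choose_spec j (fun hmem => hj (Finset.mem_biUnion.mpr ⟨k, hk, hmem⟩)), mul_zero]

lemma bndRow_zero : BndRow 0 := fun _ => ⟨∅, fun _ _ => rfl⟩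

lemma bndRow_add {X Y : Mat} (hX : BndRow X) (hY : BndRow Y) : BndRow (X + Y) := by
  intro i
  obtain ⟨s, hs⟩ := hX i; obtain ⟨t, ht⟩ := hY i
  refine ⟨s ∪ t, fun k hk => ?_⟩
  show X i k + Y i k = 0
  rw [hs k (fun h => hk (Finset.mem_union_left _ h)),
    ht k (fun h => hk (Finset.mem_union_right _ h)), add_zero]

lemma bndRow_sub {X Y : Mat} (hX : BndRow X) (hY : BndRow Y) : BndRow (X - Y) := by
  intro i
  obtain ⟨s, hs⟩ := hX i; obtain ⟨t, ht⟩ := hY i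
  refine ⟨s ∪ t, fun k hk => ?_⟩
  show X i k - Y i k = 0
  rw [hs k (fun h => hk (Finset.mem_union_left _ h)),
    ht k (fun h => hk (Finset.mem_union_right _ h)), sub_zero]

lemma bndRow_smul {X : Mat} (c : ℂ) (hX : BndRow X) : BndRow (c • X) := by
  intro i
  obtain ⟨s, hs⟩ := hX i
  refine ⟨s, fun k hk => ?_⟩
  show c * X i k = 0
  rw [hs k hk, mul_zero]

lemma bndRow_sum {ι : Type*} {t : Finset ι} {F : ι → Mat} (h : ∀ m ∈ t, BndRow (F m)) :
    BndRow (∑ m ∈ t, F m) :=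
  Finset.sum_induction F BndRow (fun _ _ => bndRow_add) bndRow_zero h

lemma mul_addR {X Y Z : Mat} (hX : BndRow X) : mul X (Y + Z) = mul X Y + mul X Z := by
  funext i j
  obtain ⟨s, hs⟩ := hX i
  show mul X (Y + Z) i j = mul X Y i j + mul X Z i j
  rw [mul_eq_sum hs, mul_eq_sum hs, mul_eq_sum hs, ← Finset.sum_add_distrib]
  exact Finset.sum_congr rfl fun k _ => by show X i k * (Y k j + Z k j) = _; ring

lemma mul_subR {X Y Z : Mat} (hX : BndRow X) : mul X (Y - Z) = mul X Y - mul X Z := by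
  funext i j
  obtain ⟨s, hs⟩ := hX i
  show mul X (Y - Z) i j = mul X Y i j - mul X Z i j
  rw [mul_eq_sum hs, mul_eq_sum hs, mul_eq_sum hs, ← Finset.sum_sub_distrib]
  exact Finset.sum_congr rfl fun k _ => by show X i k * (Y k j - Z k j) = _; ring

lemma mul_addL {X Y Z : Mat} (hX : BndRow X) (hY : BndRow Y) :
    mul (X + Y) Z = mul X Z + mul Y Z := by
  funext i j
  obtain ⟨s, hs⟩ := hX i; obtain ⟨t, ht⟩ := hY i
  have hs' : ∀ k ∉ s ∪ t, X i k = 0 := fun k hk => hs k (fun h => hk (Finset.mem_union_left _ h))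
  have ht' : ∀ k ∉ s ∪ t, Y i k = 0 := fun k hk => ht k (fun h => hk (Finset.mem_union_right _ h))
  have hst : ∀ k ∉ s ∪ t, (X + Y) i k = 0 := fun k hk => by
    show X i k + Y i k = 0; rw [hs' k hk, ht' k hk, add_zero]
  show mul (X + Y) Z i j = mul X Z i j + mul Y Z i j
  rw [mul_eq_sum hst, mul_eq_sum hs', mul_eq_sum ht', ← Finset.sum_add_distrib]
  exact Finset.sum_congr rfl fun k _ => by show (X i k + Y i k) * Z k j = _; ring

lemma mul_smulR (c : ℂ) (X Y : Mat) : mul X (c • Y) = c • mul X Y := by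
  funext i j
  show ∑' k, X i k * (c * Y k j) = c * ∑' k, X i k * Y k j
  rw [← tsum_mul_left]
  exact tsum_congr fun k => by ring

lemma mul_smulL (c : ℂ) (X Y : Mat) : mul (c • X) Y = c • mul X Y := by
  funext i j
  show ∑' k, (c * X i k) * Y k j = c * ∑' k, X i k * Y k j
  rw [← tsum_mul_left]
  exact tsum_congr fun k => by ring

lemma mul_zeroR (X : Mat) : mul X 0 = 0 := by
  funext i j; show ∑' k, X i k * 0 = 0; simp

lemma mul_zeroL (X : Mat) : mul 0 X = 0 := by
  funext i j; show ∑' k, (0 : ℂ) * X k j = 0; simp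

lemma mul_sumR {ι : Type*} {t : Finset ι} {X : Mat} (hX : BndRow X) (F : ι → Mat) :
    mul X (∑ m ∈ t, F m) = ∑ m ∈ t, mul X (F m) := by
  classical
  induction t using Finset.induction_on with
  | empty => simpa using mul_zeroR X
  | insert _ _ hmem ih =>
    rw [Finset.sum_insert hmem, Finset.sum_insert hmem, mul_addR hX, ih]

lemma mul_sumL {ι : Type*} {t : Finset ι} {F : ι → Mat} (hF : ∀ m ∈ t, BndRow (F m)) (X : Mat) :
    mul (∑ m ∈ t, F m) X = ∑ m ∈ t, mul (F m) X := by
  classical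
  induction t using Finset.induction_on with
  | empty => simpa using mul_zeroL X
  | @insert a u hmem ih =>
    rw [Finset.sum_insert hmem, Finset.sum_insert hmem,
      mul_addL (hF a (Finset.mem_insert_self a u)) (bndRow_sum fun m hm => hF m (Finset.mem_insert_of_mem hm)),
      ih fun m hm => hF m (Finset.mem_insert_of_mem hm)]

lemma mul_assoc' {X Y Z : Mat} (hX : BndRow X) (hY : BndRow Y) :
    mul (mul X Y) Z = mul X (mul Y Z) := by
  funext i j
  obtain ⟨s, hs⟩ := hX i
  calc mul (mul X Y) Z i j = ∑' k, (∑ l ∈ s, X i l * Y l k) * Z k j := by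
        refine tsum_congr fun k => ?_
        rw [mul_eq_sum hs]
    _ = ∑' k, ∑ l ∈ s, X i l * (Y l k * Z k j) := by
        refine tsum_congr fun k => ?_
        rw [Finset.sum_mul]; exact Finset.sum_congr rfl fun l _ => by ring
    _ = ∑ l ∈ s, ∑' k, X i l * (Y l k * Z k j) := by
        refine Summable.tsum_finsetSum fun l _ => ?_
        obtain ⟨t, ht⟩ := hY l
        apply summable_of_ne_finset_zero (s := t)
        intro k hk; rw [ht k hk, zero_mul, mul_zero]
    _ = ∑ l ∈ s, X i l * mul Y Z l j := by
        exact Finset.sum_congr rfl fun l _ => tsum_mul_left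
    _ = mul X (mul Y Z) i j := (mul_eq_sum hs).symm
variable (φ y : ℤ → ℂ)

lemma todaM_row {i k : ℤ} (h1 : k ≠ i - 1) (h2 : k ≠ i) (h3 : k ≠ i + 1) :
    todaM φ y i k = 0 := by
  simp only [todaM]; split_ifs <;> first | rfl | omega

lemma todaM_e1 (i : ℤ) : todaM φ y i (i - 1) = y (i - 1) := by
  simp only [todaM]; split_ifs <;> first | rfl | omega

lemma todaM_e2 (i : ℤ) : todaM φ y i i = φ i := by
  simp only [todaM]; split_ifs <;> first | rfl | omega

lemma todaM_e3 (i : ℤ) : todaM φ y i (i + 1) = y i := by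
  simp only [todaM]; split_ifs <;> first | rfl | omega

lemma todaM_symm (i j : ℤ) : todaM φ y i j = todaM φ y j i := by
  simp only [todaM]; split_ifs <;> first | rfl | omega | simp_all

lemma bndRow_todaM : BndRow (todaM φ y) := by
  intro i
  refine ⟨{i - 1, i, i + 1}, fun k hk => ?_⟩
  simp only [Finset.mem_insert, Finset.mem_singleton, not_or] at hk
  exact todaM_row φ y hk.1 hk.2.1 hk.2.2

lemma mulM (X : Mat) (i j : ℤ) :
    mul (todaM φ y) X i j
      = y (i - 1) * X (i - 1) j + φ i * X i j + y i * X (i + 1) j := by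
  rw [mul_eq_sum (s := {i - 1, i, i + 1}) (fun k hk => by
    simp only [Finset.mem_insert, Finset.mem_singleton, not_or] at hk
    exact todaM_row φ y hk.1 hk.2.1 hk.2.2)]
  rw [Finset.sum_insert (by simp; omega), Finset.sum_insert (by simp),
    Finset.sum_singleton, todaM_e1, todaM_e2, todaM_e3]

  ring

lemma todaM_col {k j : ℤ} (h1 : k ≠ j - 1) (h2 : k ≠ j) (h3 : k ≠ j + 1) :
    todaM φ y k j = 0 := by
  simp only [todaM]; split_ifs <;> first | rfl | omega

lemma todaM_c1 (j : ℤ) : todaM φ y (j - 1) j = y (j - 1) := by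
  simp only [todaM]; split_ifs <;> first | rfl | omega

lemma todaM_c3 (j : ℤ) : todaM φ y (j + 1) j = y j := by
  simp only [todaM]; split_ifs <;> first | rfl | omega

lemma mulM' (X : Mat) (i j : ℤ) :
    mul X (todaM φ y) i j
      = X i (j - 1) * y (j - 1) + X i j * φ j + X i (j + 1) * y j := by
  rw [mul_eq_sum' (s := {j - 1, j, j + 1}) (fun k hk => by
    simp only [Finset.mem_insert, Finset.mem_singleton, not_or] at hk
    exact todaM_col φ y hk.1 hk.2.1 hk.2.2)]
  rw [Finset.sum_insert (by simp; omega), Finset.sum_insert (by simp),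
    Finset.sum_singleton, todaM_c1, todaM_e2, todaM_c3]
  ring

lemma one_mul' (X : Mat) : mul one X = X := by
  funext i j
  rw [mul_eq_sum (s := {i}) (fun k hk => by
    simp only [Finset.mem_singleton] at hk
    simp only [one]; rw [if_neg (fun h => hk h.symm)])]
  simp [one]

lemma mul_one' (X : Mat) : mul X one = X := by
  funext i j
  rw [mul_eq_sum' (s := {j}) (fun k hk => by
    simp only [Finset.mem_singleton] at hk
    simp only [one]; rw [if_neg hk])]
  simp [one]

lemma bndRow_one : BndRow one := fun i =>
  ⟨{i}, fun k hk => by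
    simp only [Finset.mem_singleton] at hk
    simp only [one]; rw [if_neg (fun h => hk h.symm)]⟩

lemma bndRow_pow (m : ℕ) : BndRow (pow (todaM φ y) m) := by
  induction m with
  | zero => exact bndRow_one
  | succ m ih => exact bndRow_mul (bndRow_todaM φ y) ih

lemma pow_commM (m : ℕ) :
    mul (todaM φ y) (pow (todaM φ y) m) = mul (pow (todaM φ y) m) (todaM φ y) := by
  induction m with
  | zero => rw [show pow (todaM φ y) 0 = one from rfl, one_mul', mul_one']
  | succ m ih =>
    show mul (todaM φ y) (mul (todaM φ y) (pow (todaM φ y) m))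
      = mul (mul (todaM φ y) (pow (todaM φ y) m)) (todaM φ y)
    rw [mul_assoc' (bndRow_todaM φ y) (bndRow_pow φ y m), ← ih]

lemma pow_symm (m : ℕ) (i j : ℤ) :
    pow (todaM φ y) m i j = pow (todaM φ y) m j i := by
  induction m generalizing i j with
  | zero =>
    show one i j = one j i
    simp only [one]; split_ifs <;> first | rfl | omega
  | succ m ih =>
    show mul (todaM φ y) (pow (todaM φ y) m) i j = mul (todaM φ y) (pow (todaM φ y) m) j i
    conv_lhs => rw [pow_commM]
    show ∑' k, pow (todaM φ y) m i k * todaM φ y k j = ∑' k, todaM φ y j k * pow (todaM φ y) m k i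
    exact tsum_congr fun k => by rw [todaM_symm φ y k j, ih i k]; ring

lemma evalPoly_ext (A : Polynomial ℂ) {n : ℕ} (hn : A.natDegree < n) (X : Mat) :
    evalPoly A X = ∑ m ∈ Finset.range n, A.coeff m • pow X m := by
  unfold evalPoly
  apply Finset.sum_subset
  · intro m hm; simp only [Finset.mem_range] at *; omega
  · intro m _ hm'
    simp only [Finset.mem_range, not_lt] at hm'
    rw [Polynomial.coeff_eq_zero_of_natDegree_lt (by omega), zero_smul]

lemma bndRow_evalPoly (A : Polynomial ℂ) : BndRow (evalPoly A (todaM φ y)) :=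
  bndRow_sum fun m _ => bndRow_smul _ (bndRow_pow φ y m)

lemma evalPoly_symm (A : Polynomial ℂ) (i j : ℤ) :
    evalPoly A (todaM φ y) i j = evalPoly A (todaM φ y) j i := by
  unfold evalPoly
  rw [Finset.sum_apply, Finset.sum_apply, Finset.sum_apply, Finset.sum_apply]
  exact Finset.sum_congr rfl fun m _ => by
    show A.coeff m * pow (todaM φ y) m i j = A.coeff m * pow (todaM φ y) m j i
    rw [pow_symm]

lemma evalPoly_commM (A : Polynomial ℂ) :
    mul (todaM φ y) (evalPoly A (todaM φ y)) = mul (evalPoly A (todaM φ y)) (todaM φ y) := by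
  unfold evalPoly
  rw [mul_sumR (bndRow_todaM φ y), mul_sumL (fun m _ => bndRow_smul _ (bndRow_pow φ y m))]
  exact Finset.sum_congr rfl fun m _ => by
    rw [mul_smulR, mul_smulL, pow_commM]

lemma evalPoly_add (A B : Polynomial ℂ) (X : Mat) :
    evalPoly (A + B) X = evalPoly A X + evalPoly B X := by
  have h1 : A.natDegree < max A.natDegree ((A + B).natDegree ⊔ B.natDegree) + 1 := by omega
  have h2 : B.natDegree < max A.natDegree ((A + B).natDegree ⊔ B.natDegree) + 1 := by omega
  have h3 : (A + B).natDegree < max A.natDegree ((A + B).natDegree ⊔ B.natDegree) + 1 := by omega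
  rw [evalPoly_ext _ h3 X, evalPoly_ext _ h1 X, evalPoly_ext _ h2 X, ← Finset.sum_add_distrib]
  exact Finset.sum_congr rfl fun m _ => by rw [Polynomial.coeff_add, add_smul]

lemma evalPoly_smul (c : ℂ) (A : Polynomial ℂ) (X : Mat) :
    evalPoly (c • A) X = c • evalPoly A X := by
  have h1 : (c • A).natDegree < A.natDegree + 1 :=
    Nat.lt_succ_of_le (Polynomial.natDegree_smul_le c A)
  rw [evalPoly_ext _ h1 X, evalPoly, Finset.smul_sum]
  exact Finset.sum_congr rfl fun m _ => by
    rw [Polynomial.coeff_smul, smul_eq_mul, mul_smul]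

lemma evalPoly_sub (A B : Polynomial ℂ) (X : Mat) :
    evalPoly (A - B) X = evalPoly A X - evalPoly B X := by
  have : A - B = A + (-1 : ℂ) • B := by ring_nf; rw [neg_one_smul]; ring
  rw [this, evalPoly_add, evalPoly_smul]
  funext i j
  show evalPoly A X i j + (-1) * evalPoly B X i j = evalPoly A X i j - evalPoly B X i j
  ring

lemma evalPoly_X (X : Mat) : evalPoly Polynomial.X X = mul X one := by
  rw [evalPoly, Polynomial.natDegree_X]
  rw [Finset.sum_range_succ, Finset.sum_range_one]
  simp [Polynomial.coeff_X_zero, Polynomial.coeff_X_one]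
  rfl

lemma evalPoly_X_mul (A : Polynomial ℂ) (X : Mat) (hX : BndRow X) :
    evalPoly (Polynomial.X * A) X = mul X (evalPoly A X) := by
  have h1 : (Polynomial.X * A).natDegree < A.natDegree + 2 := by
    have := Polynomial.natDegree_mul_le (p := (Polynomial.X : Polynomial ℂ)) (q := A)
    rw [Polynomial.natDegree_X] at this
    omega
  rw [evalPoly_ext _ h1 X, Finset.sum_range_succ']
  have h0 : (Polynomial.X * A).coeff 0 = 0 := by
    rw [Polynomial.mul_coeff_zero, Polynomial.coeff_X_zero, zero_mul]
  rw [h0, zero_smul, add_zero, evalPoly, mul_sumR hX]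
  exact Finset.sum_congr rfl fun m _ => by
    rw [Polynomial.coeff_X_mul, mul_smulR]
    rfl

/-- `π(A) = A(M)₊ − A(M)₋`. -/
noncomputable def piP (φ y : ℤ → ℂ) (A : Polynomial ℂ) : Mat :=
  upper (evalPoly A (todaM φ y)) - lower (evalPoly A (todaM φ y))

lemma piP_lt (A : Polynomial ℂ) {i j : ℤ} (h : i < j) :
    piP φ y A i j = evalPoly A (todaM φ y) i j := by
  show upper (evalPoly A (todaM φ y)) i j - lower (evalPoly A (todaM φ y)) i j = _
  simp only [upper, lower]
  rw [if_pos h, if_neg (by omega), sub_zero]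

lemma piP_gt (A : Polynomial ℂ) {i j : ℤ} (h : j < i) :
    piP φ y A i j = - evalPoly A (todaM φ y) i j := by
  show upper (evalPoly A (todaM φ y)) i j - lower (evalPoly A (todaM φ y)) i j = _
  simp only [upper, lower]
  rw [if_neg (by omega), if_pos h, zero_sub]

lemma piP_diag (A : Polynomial ℂ) (i : ℤ) : piP φ y A i i = 0 := by
  show upper (evalPoly A (todaM φ y)) i i - lower (evalPoly A (todaM φ y)) i i = _
  simp [upper, lower]

lemma bndRow_upper {X : Mat} (hX : BndRow X) : BndRow (upper X) := by
  intro i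
  obtain ⟨s, hs⟩ := hX i
  refine ⟨s, fun k hk => ?_⟩
  simp only [upper, hs k hk]
  split_ifs <;> rfl

lemma bndRow_lower {X : Mat} (hX : BndRow X) : BndRow (lower X) := by
  intro i
  obtain ⟨s, hs⟩ := hX i
  refine ⟨s, fun k hk => ?_⟩
  simp only [lower, hs k hk]
  split_ifs <;> rfl

lemma bndRow_piP (A : Polynomial ℂ) : BndRow (piP φ y A) :=
  bndRow_sub (bndRow_upper (bndRow_evalPoly φ y A)) (bndRow_lower (bndRow_evalPoly φ y A))

lemma hAc {A : Polynomial ℂ} (hA : comm (todaM φ y) (piP φ y A) = 0) :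
    mul (todaM φ y) (piP φ y A) = mul (piP φ y A) (todaM φ y) := by
  unfold comm at hA
  exact sub_eq_zero.mp hA

/-- `y (i-1) * S (i-1) i = y i * S (i+1) i`. -/
lemma offdiag_const {A : Polynomial ℂ} (hA : comm (todaM φ y) (piP φ y A) = 0) (i : ℤ) :
    y (i - 1) * evalPoly A (todaM φ y) (i - 1) i
      = y i * evalPoly A (todaM φ y) (i + 1) i := by
  have h := congrFun (congrFun (hAc φ y hA) i) i
  rw [mulM, mulM'] at h
  rw [piP_lt φ y A (by omega : i - 1 < i), piP_gt φ y A (by omega : i < i + 1),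
    piP_diag, piP_lt φ y A (by omega : i < i + 1), piP_gt φ y A (by omega : i - 1 < i)] at h
  rw [evalPoly_symm φ y A i (i - 1), evalPoly_symm φ y A i (i + 1)] at h
  linear_combination h / 2

/-- Diagonal constancy, one step. -/
lemma diag_step (hy0 : ∀ i, y i ≠ 0) {A : Polynomial ℂ}
    (hA : comm (todaM φ y) (piP φ y A) = 0) (i : ℤ) :
    evalPoly A (todaM φ y) (i + 1) (i + 1) = evalPoly A (todaM φ y) i i := by
  have h := congrFun (congrFun (hAc φ y hA) i) (i + 1)
  rw [mulM, mulM'] at h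
  rw [show i + 1 - 1 = i from by omega, show i + 1 + 1 = i + 2 from by omega] at h
  rw [piP_lt φ y A (by omega : i - 1 < i + 1), piP_lt φ y A (by omega : i < i + 1),
    piP_diag, piP_diag, piP_lt φ y A (by omega : i < i + 2)] at h
  have h2 := congrFun (congrFun (evalPoly_commM φ y A) i) (i + 1)
  rw [mulM, mulM'] at h2
  have h3 : y i * evalPoly A (todaM φ y) (i + 1) (i + 1)
      = y i * evalPoly A (todaM φ y) i i := by
    rw [show i + 1 - 1 = i from by omega, show i + 1 + 1 = i + 2 from by omega] at h2
    linear_combination h2 - h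
  exact mul_left_cancel₀ (hy0 i) h3

lemma diag_const (hy0 : ∀ i, y i ≠ 0) {A : Polynomial ℂ}
    (hA : comm (todaM φ y) (piP φ y A) = 0) (i : ℤ) :
    evalPoly A (todaM φ y) i i = evalPoly A (todaM φ y) 0 0 := by
  induction i using Int.induction_on with
  | zero => rfl
  | succ n ih => rw [diag_step φ y hy0 hA n, ih]
  | pred n ih =>
    have h := diag_step φ y hy0 hA (-(n : ℤ) - 1)
    rw [show -(n : ℤ) - 1 + 1 = -n from by omega] at h
    rw [← h]
    exact ih

/-- The key identity: `M · π(A) = π(X·A − S₀₀·X)`. -/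
lemma key (hy0 : ∀ i, y i ≠ 0) {A : Polynomial ℂ}
    (hA : comm (todaM φ y) (piP φ y A) = 0) :
    mul (todaM φ y) (piP φ y A)
      = piP φ y (Polynomial.X * A - (evalPoly A (todaM φ y) 0 0) • Polynomial.X) := by
  have hEval : evalPoly (Polynomial.X * A - (evalPoly A (todaM φ y) 0 0) • Polynomial.X)
        (todaM φ y)
      = mul (todaM φ y) (evalPoly A (todaM φ y))
        - (evalPoly A (todaM φ y) 0 0) • todaM φ y := by
    rw [evalPoly_sub, evalPoly_X_mul _ _ (bndRow_todaM φ y), evalPoly_smul, evalPoly_X,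
      mul_one']
  funext i j
  rcases lt_trichotomy i j with hlt | heq | hgt
  · rw [piP_lt φ y _ hlt, hEval]
    show mul (todaM φ y) (piP φ y A) i j
      = mul (todaM φ y) (evalPoly A (todaM φ y)) i j
        - evalPoly A (todaM φ y) 0 0 * todaM φ y i j
    rw [mulM, mulM]
    by_cases hj : j = i + 1
    · subst hj
      rw [piP_lt φ y A (by omega : i - 1 < i + 1), piP_lt φ y A (by omega : i < i + 1),
        piP_diag, todaM_e3]
      have hd := diag_const φ y hy0 hA (i + 1)
      rw [hd]; ring
    · rw [piP_lt φ y A (by omega : i - 1 < j), piP_lt φ y A (by omega : i < j),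
        piP_lt φ y A (by omega : i + 1 < j), todaM_row φ y (by omega) (by omega) (by omega)]
      ring
  · subst heq
    rw [piP_diag]
    show mul (todaM φ y) (piP φ y A) i i = 0
    rw [mulM, piP_lt φ y A (by omega : i - 1 < i), piP_gt φ y A (by omega : i < i + 1),
      piP_diag]
    linear_combination offdiag_const φ y hA i
  · rw [piP_gt φ y _ hgt, hEval]
    show mul (todaM φ y) (piP φ y A) i j
      = -(mul (todaM φ y) (evalPoly A (todaM φ y)) i j
        - evalPoly A (todaM φ y) 0 0 * todaM φ y i j)
    rw [mulM, mulM]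
    by_cases hj : j = i - 1
    · subst hj
      rw [piP_diag, piP_gt φ y A (by omega : i - 1 < i),
        piP_gt φ y A (by omega : i - 1 < i + 1), todaM_e1]
      have hd := diag_const φ y hy0 hA (i - 1)
      rw [hd]; ring
    · rw [piP_gt φ y A (by omega : j < i - 1), piP_gt φ y A (by omega : j < i),
        piP_gt φ y A (by omega : j < i + 1), todaM_row φ y (by omega) (by omega) (by omega)]
      ring

lemma upper_add (X Y : Mat) : upper (X + Y) = upper X + upper Y := by
  funext i j
  show (if i < j then X i j + Y i j else 0) = (if i < j then X i j else 0) + (if i < j then Y i j else 0)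
  split_ifs <;> simp

lemma lower_add (X Y : Mat) : lower (X + Y) = lower X + lower Y := by
  funext i j
  show (if j < i then X i j + Y i j else 0) = (if j < i then X i j else 0) + (if j < i then Y i j else 0)
  split_ifs <;> simp

lemma upper_smul (c : ℂ) (X : Mat) : upper (c • X) = c • upper X := by
  funext i j
  show (if i < j then c * X i j else 0) = c * (if i < j then X i j else 0)
  split_ifs <;> simp

lemma lower_smul (c : ℂ) (X : Mat) : lower (c • X) = c • lower X := by
  funext i j
  show (if j < i then c * X i j else 0) = c * (if j < i then X i j else 0)
  split_ifs <;> simp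

lemma piP_add (A B : Polynomial ℂ) : piP φ y (A + B) = piP φ y A + piP φ y B := by
  unfold piP
  rw [evalPoly_add, upper_add, lower_add]
  abel

lemma piP_smul (c : ℂ) (A : Polynomial ℂ) : piP φ y (c • A) = c • piP φ y A := by
  unfold piP
  rw [evalPoly_smul, upper_smul, lower_smul, smul_sub]

lemma piP_zero : piP φ y 0 = 0 := by
  have h0 : evalPoly (0 : Polynomial ℂ) (todaM φ y) = 0 := by
    simp [evalPoly]
  unfold piP
  rw [h0]
  funext i j
  show (if i < j then (0:ℂ) else 0) - (if j < i then (0:ℂ) else 0) = 0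
  split_ifs <;> simp

lemma piP_sum {ι : Type*} (t : Finset ι) (g : ι → Polynomial ℂ) :
    piP φ y (∑ m ∈ t, g m) = ∑ m ∈ t, piP φ y (g m) := by
  classical
  induction t using Finset.induction_on with
  | empty => simpa using piP_zero φ y
  | @insert a u hmem ih =>
    rw [Finset.sum_insert hmem, Finset.sum_insert hmem, piP_add, ih]

/-- If `X` and `W` both commute with `M` and have finite rows, so does `X·W`. -/
lemma comm_mul_left {X W : Mat} (hX : BndRow X) (hW : BndRow W)
    (hXM : mul (todaM φ y) X = mul X (todaM φ y))
    (hWM : mul (todaM φ y) W = mul W (todaM φ y)) :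
    mul (todaM φ y) (mul X W) = mul (mul X W) (todaM φ y) := by
  rw [mul_assoc' hX hW, ← hWM, ← mul_assoc' hX (bndRow_todaM φ y), ← hXM,
    mul_assoc' (bndRow_todaM φ y) hX]

lemma pow_lift {A : Polynomial ℂ} (hy0 : ∀ i, y i ≠ 0)
    (hA : comm (todaM φ y) (piP φ y A) = 0) (m : ℕ) :
    ∃ C : Polynomial ℂ,
      piP φ y C = mul (pow (todaM φ y) m) (piP φ y A) ∧
      comm (todaM φ y) (piP φ y C) = 0 := by
  induction m with
  | zero => exact ⟨A, by rw [show pow (todaM φ y) 0 = one from rfl, one_mul'], hA⟩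
  | succ m ih =>
    obtain ⟨C, hC1, hC2⟩ := ih
    refine ⟨Polynomial.X * C - (evalPoly C (todaM φ y) 0 0) • Polynomial.X, ?_, ?_⟩
    · rw [← key φ y hy0 hC2, hC1,
        ← mul_assoc' (bndRow_todaM φ y) (bndRow_pow φ y m)]
      rfl
    · rw [← key φ y hy0 hC2, hC1]
      have h := comm_mul_left φ y (bndRow_pow φ y m) (bndRow_piP φ y A)
        (pow_commM φ y m) (hAc φ y hA)
      have h2 : mul (todaM φ y) (mul (todaM φ y) (mul (pow (todaM φ y) m) (piP φ y A)))
          = mul (mul (todaM φ y) (mul (pow (todaM φ y) m) (piP φ y A))) (todaM φ y) :=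
        comm_mul_left φ y (bndRow_todaM φ y)
          (bndRow_mul (bndRow_pow φ y m) (bndRow_piP φ y A)) rfl h
      unfold comm
      rw [h2, sub_self]


/-- closure property for the Euclid algorithm: if
`[M, A(M)₊ − A(M)₋] = 0` and `[M, B(M)₊ − B(M)₋] = 0`, then for any polynomial
`Q` the matrix `Q(M)(A(M)₊ − A(M)₋) + (B(M)₊ − B(M)₋)` is of the form
`C(M)₊ − C(M)₋` and commutes with `M`. -/
theorem euclid_step_closure
    (N : ℕ) (hN : 0 < N) (φ y : ℤ → ℂ)
    (hφ : ∀ i, φ (i + N) = φ i) (hy : ∀ i, y (i + N) = y i)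
    (hy0 : ∀ i, y i ≠ 0)
    (A B : Polynomial ℂ)
    (hA : comm (todaM φ y)
      (upper (evalPoly A (todaM φ y)) - lower (evalPoly A (todaM φ y))) = 0)
    (hB : comm (todaM φ y)
      (upper (evalPoly B (todaM φ y)) - lower (evalPoly B (todaM φ y))) = 0) :
    ∀ Q : Polynomial ℂ, ∃ C : Polynomial ℂ,
      mul (evalPoly Q (todaM φ y))
          (upper (evalPoly A (todaM φ y)) - lower (evalPoly A (todaM φ y)))
        + (upper (evalPoly B (todaM φ y)) - lower (evalPoly B (todaM φ y)))
        = upper (evalPoly C (todaM φ y)) - lower (evalPoly C (todaM φ y)) ∧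
      comm (todaM φ y)
        (upper (evalPoly C (todaM φ y)) - lower (evalPoly C (todaM φ y))) = 0 := by
  intro Q
  have hA' : comm (todaM φ y) (piP φ y A) = 0 := hA
  have hB' : comm (todaM φ y) (piP φ y B) = 0 := hB
  choose f hf1 hf2 using fun m : ℕ => pow_lift φ y hy0 hA' m
  set n := Q.natDegree + 1 with hn
  refine ⟨(∑ m ∈ Finset.range n, Q.coeff m • f m) + B, ?_, ?_⟩
  · show mul (evalPoly Q (todaM φ y)) (piP φ y A) + piP φ y B
      = piP φ y ((∑ m ∈ Finset.range n, Q.coeff m • f m) + B)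
    rw [piP_add, piP_sum]
    congr 1
    show mul (∑ m ∈ Finset.range n, Q.coeff m • pow (todaM φ y) m) (piP φ y A) = _
    rw [mul_sumL (fun m _ => bndRow_smul _ (bndRow_pow φ y m))]
    exact Finset.sum_congr rfl fun m _ => by
      rw [mul_smulL, piP_smul, hf1 m]
  · show comm (todaM φ y) (piP φ y ((∑ m ∈ Finset.range n, Q.coeff m • f m) + B)) = 0
    have hC : piP φ y ((∑ m ∈ Finset.range n, Q.coeff m • f m) + B)
        = (∑ m ∈ Finset.range n, Q.coeff m • piP φ y (f m)) + piP φ y B := by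
      rw [piP_add, piP_sum]
      congr 1
      exact Finset.sum_congr rfl fun m _ => piP_smul φ y _ _
    have hUb : BndRow (∑ m ∈ Finset.range n, Q.coeff m • piP φ y (f m)) :=
      bndRow_sum fun m _ => bndRow_smul _ (bndRow_piP φ y (f m))
    have hU : mul (todaM φ y) (∑ m ∈ Finset.range n, Q.coeff m • piP φ y (f m))
        = mul (∑ m ∈ Finset.range n, Q.coeff m • piP φ y (f m)) (todaM φ y) := by
      rw [mul_sumR (bndRow_todaM φ y),
        mul_sumL (fun m _ => bndRow_smul _ (bndRow_piP φ y (f m)))]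
      exact Finset.sum_congr rfl fun m _ => by
        rw [mul_smulR, mul_smulL, hAc φ y (hf2 m)]
    rw [hC]
    unfold comm
    rw [mul_addR (bndRow_todaM φ y), mul_addL hUb (bndRow_piP φ y B), hU, hAc φ y hB',
      sub_self]


end Toda
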